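/- arXiv:1210.6299 — 5 statements merged into one kernel-verified Lean document; each statement's English description precedes it below -/
import Mathlib

section
/- Under the hypotheses of folding (σ an admissible automorphism of the symmetrizable generalized Cartan matrix A), the folding map π on root lattices intertwines the orbit reflection s_ī^σ := Π_{t∈ī} s_t (a well-defined product since the simple reflections for indices in one orbit pairwise commute) with the simple reflection s_ī of the folded root system: s_ī(π(α)) = π(s_ī^σ(α)) for every element α of the root lattice of A. -/
open scoped Classical

/-- `A` is a symmetrizable generalized Cartan matrix. -/
def IsGCM {I : Type*} [Fintype I] (A : I → I → ℤ) : Prop :=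
  (∀ i, A i i = 2) ∧ (∀ i j, i ≠ j → A i j ≤ 0) ∧ (∀ i j, A i j = 0 ↔ A j i = 0) ∧
  ∃ d : I → ℤ, (∀ i, 0 < d i) ∧ ∀ i j, d i * A i j = d j * A j i

/-- The simple reflection `s_i` acting on the root lattice. -/
def srefl {I : Type*} [Fintype I] [DecidableEq I] (A : I → I → ℤ) (i : I)
    (v : I → ℤ) : I → ℤ :=
  fun k => if k = i then v i - ∑ j, A i j * v j else v k

/-- The setoid on `I` whose classes are the `σ`-orbits. -/
def orbitSetoid {I : Type*} (σ : Equiv.Perm I) : Setoid I :=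
  ⟨σ.SameCycle, ⟨fun _ => Equiv.Perm.SameCycle.refl σ _,
    Equiv.Perm.SameCycle.symm, Equiv.Perm.SameCycle.trans⟩⟩

/-- The folded Cartan matrix, indexed by `σ`-orbits: `ā_{ī j̄} = Σ_{s∈ī} a_{s j}`. -/
noncomputable def foldedMatrix {I : Type*} [Fintype I] (A : I → I → ℤ)
    (σ : Equiv.Perm I) :
    Quotient (orbitSetoid σ) → Quotient (orbitSetoid σ) → ℤ :=
  fun q r => ∑ s ∈ Finset.univ.filter (fun s => σ.SameCycle q.out s), A s r.out

/-- The folding map on root lattices, sending `αᵢ` to `α_{ī}`. -/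
noncomputable def foldVec {I : Type*} [Fintype I] (σ : Equiv.Perm I)
    (α : I → ℤ) : Quotient (orbitSetoid σ) → ℤ :=
  fun q => ∑ s ∈ Finset.univ.filter (fun s => σ.SameCycle q.out s), α s

lemma foldr_srefl_eq {I : Type*} [Fintype I] [DecidableEq I] (A : I → I → ℤ)
    (L : List I) (hL : L.Nodup)
    (horb : ∀ t ∈ L, ∀ t' ∈ L, t ≠ t' → A t t' = 0) (α : I → ℤ) (x : I) :
    (L.foldr (fun t w => srefl A t w) α) x
      = if x ∈ L then α x - ∑ j, A x j * α j else α x := by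
  induction L generalizing x with
  | nil => simp
  | cons t L ih =>
    have hnd := List.nodup_cons.mp hL
    have horb' : ∀ a ∈ L, ∀ b ∈ L, a ≠ b → A a b = 0 := fun a ha b hb =>
      horb a (List.mem_cons_of_mem _ ha) b (List.mem_cons_of_mem _ hb)
    simp only [List.foldr_cons]
    set w := L.foldr (fun t w => srefl A t w) α with hw
    have ihw : ∀ y, w y = if y ∈ L then α y - ∑ j, A y j * α j else α y :=
      fun y => ih hnd.2 horb' y
    by_cases hx : x = t
    · subst hx
      have hwx : w x = α x := by rw [ihw]; simp [hnd.1]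
      have hsum : ∑ j, A x j * w j = ∑ j, A x j * α j := by
        apply Finset.sum_congr rfl
        intro j _
        by_cases hj : j ∈ L
        · have hjx : x ≠ j := fun h => hnd.1 (h ▸ hj)
          rw [horb x List.mem_cons_self j (List.mem_cons_of_mem _ hj) hjx]
          simp
        · rw [ihw]; simp [hj]
      simp [srefl, hwx, hsum, List.mem_cons]
    · simp only [srefl, if_neg hx, ihw x, List.mem_cons]
      have : ¬ (x = t ∨ x ∈ L) ↔ ¬ x ∈ L := by
        constructor
        · intro h hmem; exact h (Or.inr hmem)
        · intro h hmem; rcases hmem with h' | h'; exact hx h'; exact h h'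
      by_cases hxl : x ∈ L
      · rw [if_pos hxl, if_pos (Or.inr hxl)]
      · rw [if_neg hxl, if_neg (fun h => by rcases h with h | h; exact hx h; exact hxl h)]

lemma sameCycle_invariant {I : Type*} (σ : Equiv.Perm I) (c : I → ℤ)
    (hc : ∀ x, c (σ x) = c x) {a b : I} (h : σ.SameCycle a b) : c a = c b := by
  obtain ⟨n, rfl⟩ := h
  induction n using Int.induction_on with
  | zero => simp
  | succ n ih =>
      have : (σ ^ ((n : ℤ) + 1)) a = σ ((σ ^ (n : ℤ)) a) := by
        rw [add_comm, zpow_add, zpow_one, Equiv.Perm.mul_apply]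
      rw [this, hc]; exact ih
  | pred n ih =>
      have h1 : σ ((σ ^ (-(n : ℤ) - 1)) a) = (σ ^ (-(n : ℤ))) a := by
        rw [← Equiv.Perm.mul_apply, ← zpow_one_add]
        norm_num
      calc c a = c ((σ ^ (-(n:ℤ))) a) := ih
    _ = c (σ ((σ ^ (-(n:ℤ) - 1)) a)) := by rw [h1]
    _ = c ((σ ^ (-(n:ℤ) - 1)) a) := hc _

/-- The finset of indices in the orbit `r` (with classical decidability,
matching `foldedMatrix` and `foldVec`). -/
noncomputable def orbFin {I : Type*} [Fintype I] (σ : Equiv.Perm I)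
    (r : Quotient (orbitSetoid σ)) : Finset I :=
  Finset.univ.filter (fun s => σ.SameCycle r.out s)

/-- The folding map intertwines the orbit reflection `s_k̄^σ = Π_{t∈k̄} s_t`
(the product of the pairwise commuting simple reflections at the indices of the
orbit of `k`) with the simple reflection of the folded root system at `k̄`. -/
theorem folding_intertwines_reflections {I : Type*} [Fintype I] [DecidableEq I]
    (A : I → I → ℤ) (hA : IsGCM A) (σ : Equiv.Perm I)
    (haut : ∀ i j, A (σ i) (σ j) = A i j)
    (hadm : ∀ i₁ i₂, i₁ ≠ i₂ → σ.SameCycle i₁ i₂ → A i₁ i₂ = 0)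
    (k : I) (α : I → ℤ) :
    srefl (foldedMatrix A σ) (Quotient.mk (orbitSetoid σ) k) (foldVec σ α)
      = foldVec σ
          (((Finset.univ.filter (fun t => σ.SameCycle k t)).toList).foldr
            (fun t w => srefl A t w) α) := by
  classical
  have hmemF : ∀ (r : Quotient (orbitSetoid σ)) (s : I),
      s ∈ orbFin σ r ↔ σ.SameCycle r.out s := by
    intro r s; simp [orbFin]
  have hmk : ∀ (r : Quotient (orbitSetoid σ)) (s : I),
      σ.SameCycle r.out s ↔ Quotient.mk (orbitSetoid σ) s = r := by
    intro r s
    constructor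
    · intro h
      rw [← Quotient.out_eq r]
      exact Quot.sound h.symm
    · intro h
      have h2 : Quotient.mk (orbitSetoid σ) r.out = Quotient.mk (orbitSetoid σ) s := by
        rw [Quotient.out_eq r, h]
      exact Quotient.exact h2
  have houtk : σ.SameCycle (Quotient.mk (orbitSetoid σ) k).out k :=
    Quotient.mk_out (s := orbitSetoid σ) k
  -- the foldr computation
  set L : List I := (Finset.univ.filter (fun t => σ.SameCycle k t)).toList with hL
  have hLmem : ∀ x, x ∈ L ↔ σ.SameCycle k x := by
    intro x; rw [hL, Finset.mem_toList, Finset.mem_filter]; simp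
  set β : I → ℤ := L.foldr (fun t w => srefl A t w) α with hβdef
  have hβ : ∀ x, β x = if σ.SameCycle k x then α x - ∑ j, A x j * α j else α x := by
    intro x
    rw [hβdef, foldr_srefl_eq A L (Finset.nodup_toList _)
      (fun t ht t' ht' hne => hadm t t' hne (((hLmem t).mp ht).symm.trans ((hLmem t').mp ht')))]
    by_cases hx : σ.SameCycle k x
    · rw [if_pos ((hLmem x).mpr hx), if_pos hx]
    · rw [if_neg (fun h => hx ((hLmem x).mp h)), if_neg hx]
  have hfoldVec : ∀ (v : I → ℤ) q, foldVec σ v q = ∑ s ∈ orbFin σ q, v s := fun _ _ => rfl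
  have hfoldM : ∀ q r, foldedMatrix A σ q r = ∑ s ∈ orbFin σ q, A s r.out := fun _ _ => rfl
  funext q
  by_cases hq : q = Quotient.mk (orbitSetoid σ) k
  · subst hq
    set K := Quotient.mk (orbitSetoid σ) k with hK
    have hβF : ∀ s ∈ orbFin σ K, β s = α s - ∑ j, A s j * α j := by
      intro s hs
      rw [hβ s, if_pos (houtk.symm.trans ((hmemF K s).mp hs))]
    have hRHS : foldVec σ β K = foldVec σ α K - ∑ s ∈ orbFin σ K, ∑ j, A s j * α j := by
      rw [hfoldVec, hfoldVec, ← Finset.sum_sub_distrib]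
      exact Finset.sum_congr rfl (fun s hs => hβF s hs)
    have hLHS : srefl (foldedMatrix A σ) K (foldVec σ α) K
        = foldVec σ α K - ∑ r, foldedMatrix A σ K r * foldVec σ α r := by
      simp [srefl]
    rw [hRHS, hLHS]
    congr 1
    -- key identity
    set c : I → ℤ := fun j => ∑ s ∈ orbFin σ K, A s j with hc
    have hcσ : ∀ j, c (σ j) = c j := by
      intro j
      refine (Finset.sum_bij (fun s _ => σ s) ?_ ?_ ?_ ?_).symm
      · intro s hs
        rw [hmemF] at hs ⊢
        exact hs.apply_right
      · intro a _ b _ hab; exact σ.injective hab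
      · intro b hb
        refine ⟨σ⁻¹ b, ?_, by simp⟩
        rw [hmemF] at hb ⊢
        exact (Equiv.Perm.sameCycle_symm_apply_right).mpr hb
      · intro s _; exact (haut s j).symm
    have hcconst : ∀ a b, σ.SameCycle a b → c a = c b :=
      fun a b h => sameCycle_invariant σ c hcσ h
    calc ∑ r, foldedMatrix A σ K r * foldVec σ α r
        = ∑ r, ∑ j ∈ orbFin σ r, c j * α j := by
          refine Finset.sum_congr rfl (fun r _ => ?_)
          rw [hfoldM, hfoldVec]
          have hcr : (∑ s ∈ orbFin σ K, A s r.out) = c r.out := rfl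
          rw [hcr, Finset.mul_sum]
          exact Finset.sum_congr rfl (fun j hj => by
            rw [hcconst r.out j ((hmemF r j).mp hj)])
      _ = ∑ j, c j * α j := by
          rw [← Finset.sum_fiberwise Finset.univ (Quotient.mk (orbitSetoid σ))
            (fun j => c j * α j)]
          refine Finset.sum_congr rfl (fun r _ => ?_)
          refine Finset.sum_congr ?_ (fun _ _ => rfl)
          ext j
          simp only [Finset.mem_filter, Finset.mem_univ, true_and, hmemF, hmk]
      _ = ∑ s ∈ orbFin σ K, ∑ j, A s j * α j := by
          rw [Finset.sum_comm]
          refine Finset.sum_congr rfl (fun j _ => ?_)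
          rw [Finset.sum_mul]
  · -- other orbits are untouched
    have hLHS : srefl (foldedMatrix A σ) (Quotient.mk (orbitSetoid σ) k) (foldVec σ α) q
        = foldVec σ α q := by
      simp [srefl, hq]
    rw [hLHS, hfoldVec, hfoldVec]
    refine Finset.sum_congr rfl (fun s hs => ?_)
    rw [hβ s, if_neg]
    intro hks
    exact hq (((hmk q s).mp ((hmemF q s).mp hs)).symm.trans (Quot.sound hks).symm)
end

section
/- Let B be a skew-symmetrizable matrix with admissible automorphism σ and let k₁,…,k_m be the elements of a single σ-orbit k̄. Then the composite mutation μ_{k̄}^σ := μ_{k_m}∘⋯∘μ_{k₁} applied to B is given in closed form by: (μ_{k̄}^σ B)_{ij} = −b_{ij} if i ∈ k̄ or j ∈ k̄, and b_{ij} + Σ_{t∈k̄}(b_{it}[b_{tj}]_+ + [−b_{it}]_+ b_{tj}) otherwise. -/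
open scoped Classical

/-- Matrix mutation in direction `k`, for a matrix indexed by `I`. -/
def mutateB {I : Type*} [DecidableEq I] (B : I → I → ℤ) (k : I) : I → I → ℤ :=
  fun i j =>
    if i = k ∨ j = k then -B i j
    else B i j + B i k * max (B k j) 0 + max (-B i k) 0 * B k j

lemma fold_closed {I : Type*} [DecidableEq I] (B : I → I → ℤ) (P : I → Prop)
    (h0 : ∀ s t, P s → P t → B s t = 0) :
    ∀ L : List I, L.Nodup → (∀ t ∈ L, P t) →
      (L.foldr (fun t M => mutateB M t) B) = fun i j =>
        if i ∈ L ∨ j ∈ L then -B i j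
        else B i j +
          (L.map (fun t => B i t * max (B t j) 0 + max (-B i t) 0 * B t j)).sum := by
  intro L
  induction L with
  | nil => intro _ _; funext i j; simp
  | cons t L IH =>
    intro hnd hP
    have htL : t ∉ L := (List.nodup_cons.mp hnd).1
    have hPt : P t := hP t (List.mem_cons_self)
    have hPL : ∀ s ∈ L, P s := fun s hs => hP s (List.mem_cons_of_mem _ hs)
    have IH' := IH (List.nodup_cons.mp hnd).2 hPL
    have hsum0 : ∀ (f : I → ℤ), (∀ x ∈ L, f x = 0) → (L.map f).sum = 0 := by
      intro f hf
      refine List.sum_eq_zero ?_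
      intro x hx
      obtain ⟨y, hy, rfl⟩ := List.mem_map.mp hx
      exact hf y hy
    funext i j
    show mutateB (L.foldr (fun t M => mutateB M t) B) t i j = _
    rw [IH']
    simp only [mutateB]
    -- key values
    have hFLit : (if i ∈ L ∨ t ∈ L then -B i t
        else B i t + (L.map (fun s => B i s * max (B s t) 0 + max (-B i s) 0 * B s t)).sum)
        = if i ∈ L then 0 else B i t := by
      by_cases hiL : i ∈ L
      · simp only [hiL, true_or, if_true, if_pos]
        rw [h0 i t (hPL i hiL) hPt]; ring
      · simp only [hiL, htL, false_or, if_false]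
        rw [hsum0]
        · ring
        · intro x hx
          simp [h0 x t (hPL x hx) hPt]
    have hFLtj : (if t ∈ L ∨ j ∈ L then -B t j
        else B t j + (L.map (fun s => B t s * max (B s j) 0 + max (-B t s) 0 * B s j)).sum)
        = if j ∈ L then 0 else B t j := by
      by_cases hjL : j ∈ L
      · simp only [hjL, or_true, if_true, if_pos]
        rw [h0 t j hPt (hPL j hjL)]; ring
      · simp only [hjL, htL, or_false, if_false]
        rw [hsum0]
        · ring
        · intro x hx
          simp [h0 t x hPt (hPL x hx)]
    by_cases hit : i = t ∨ j = t
    · rw [if_pos hit]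
      have hmem : i ∈ t :: L ∨ j ∈ t :: L := by
        rcases hit with h | h
        · exact Or.inl (h ▸ List.mem_cons_self)
        · exact Or.inr (h ▸ List.mem_cons_self)
      rw [if_pos hmem]
      by_cases hL : i ∈ L ∨ j ∈ L
      · rw [if_pos hL]
        have hBij : B i j = 0 := by
          rcases hit with rfl | rfl
          · rcases hL with h | h
            · exact absurd h htL
            · exact h0 i j hPt (hPL j h)
          · rcases hL with h | h
            · exact h0 i j (hPL i h) hPt
            · exact absurd h htL
        rw [hBij]; ring
      · rw [if_neg hL]
        have : (L.map (fun s => B i s * max (B s j) 0 + max (-B i s) 0 * B s j)).sum = 0 := by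
          apply hsum0
          intro x hx
          rcases hit with rfl | rfl
          · simp [h0 i x hPt (hPL x hx)]
          · simp [h0 x j (hPL x hx) hPt]
        rw [this]; ring
    · rw [if_neg hit]
      rw [hFLit, hFLtj]
      have hne1 : i ≠ t := fun h => hit (Or.inl h)
      have hne2 : j ≠ t := fun h => hit (Or.inr h)
      by_cases hL : i ∈ L ∨ j ∈ L
      · by_cases hiL : i ∈ L <;> by_cases hjL : j ∈ L
        · simp [List.mem_cons, hne1, hne2, hiL, hjL]
        · simp [List.mem_cons, hne1, hne2, hiL, hjL]
        · simp [List.mem_cons, hne1, hne2, hiL, hjL]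
        · exact absurd hL (by simp [hiL, hjL])
      · have hiL : i ∉ L := fun h => hL (Or.inl h)
        have hjL : j ∉ L := fun h => hL (Or.inr h)
        have hmem' : ¬(i ∈ t :: L ∨ j ∈ t :: L) := by
          simp [List.mem_cons, hne1, hne2, hiL, hjL]
        rw [if_neg hmem', if_neg hL, if_neg hiL, if_neg hjL]
        simp only [List.map_cons, List.sum_cons]
        ring

/-- Closed form for the orbit mutation `μ_{k̄}^σ = Π_{t∈k̄} μ_t` of a
skew-symmetrizable matrix with an admissible automorphism `σ`. -/
theorem orbit_mutation_closed_form {I : Type*} [Fintype I] [DecidableEq I]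
    (B : I → I → ℤ)
    (hskew : ∃ d : I → ℤ, (∀ i, 0 < d i) ∧ ∀ i j, d i * B i j = -(d j * B j i))
    (σ : Equiv.Perm I)
    (haut : ∀ i j, B (σ i) (σ j) = B i j)
    (hadm : ∀ i₁ i₂, σ.SameCycle i₁ i₂ →
      (i₁ ≠ i₂ → B i₁ i₂ = 0) ∧ ∀ j, 0 ≤ B i₁ j * B i₂ j)
    (k : I) :
    ((Finset.univ.filter (fun t => σ.SameCycle k t)).toList.foldr
        (fun t M => mutateB M t) B)
      = fun i j =>
          if σ.SameCycle k i ∨ σ.SameCycle k j then -B i j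
          else B i j + ∑ t ∈ Finset.univ.filter (fun t => σ.SameCycle k t),
            (B i t * max (B t j) 0 + max (-B i t) 0 * B t j) := by
  obtain ⟨d, hd, hs⟩ := hskew
  have hdiag : ∀ i, B i i = 0 := by
    intro i
    have h := hs i i
    have : d i * B i i = 0 := by linarith
    rcases mul_eq_zero.mp this with h' | h'
    · exact absurd h' (hd i).ne'
    · exact h'
  have h0 : ∀ s t, σ.SameCycle k s → σ.SameCycle k t → B s t = 0 := by
    intro s t hks hkt
    by_cases h : s = t
    · subst h; exact hdiag s
    · exact (hadm s t (hks.symm.trans hkt)).1 h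
  set F := Finset.univ.filter (fun t => σ.SameCycle k t) with hF
  have hmem : ∀ x, x ∈ F.toList ↔ σ.SameCycle k x := by
    intro x; simp [hF, Finset.mem_toList]
  rw [fold_closed B (σ.SameCycle k) h0 F.toList F.nodup_toList
    (fun t ht => (hmem t).mp ht)]
  funext i j
  rw [← Finset.sum_map_toList]
  simp only [hmem i, hmem j]
end

section
/- Let B be a skew-symmetrizable matrix with admissible automorphism σ, and suppose C = (c_{ij}) is an integer matrix satisfying c_{σ(i)σ(j)} = c_{ij} for all i, j. If (B', C') is obtained from (B, C) by a single orbit-mutation μ_{k̄}^σ (composing the C-matrix mutations over all indices in the σ-orbit k̄), then C' also satisfies c'_{σ(i)σ(j)} = c'_{ij} for all i, j. -/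
open scoped Classical

/-- Mutation of a pair (exchange matrix, C-matrix) in direction `k`. -/
def mutatePair {I : Type*} [DecidableEq I] (p : (I → I → ℤ) × (I → I → ℤ)) (k : I) :
    (I → I → ℤ) × (I → I → ℤ) :=
  (mutateB p.1 k,
    fun i j =>
      if j = k then -p.2 i j
      else p.2 i j + p.2 i k * max (p.1 k j) 0 + max (-p.2 i k) 0 * p.1 k j)

section Aux

variable {I : Type*} [DecidableEq I]

/-- Mutations at two directions commute when the relevant B-entries vanish. -/
lemma mutatePair_comm (p : (I → I → ℤ) × (I → I → ℤ)) (t₁ t₂ : I)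
    (hne : t₁ ≠ t₂) (h12 : p.1 t₁ t₂ = 0) (h21 : p.1 t₂ t₁ = 0) :
    mutatePair (mutatePair p t₁) t₂ = mutatePair (mutatePair p t₂) t₁ := by
  obtain ⟨B, C⟩ := p
  simp only [] at h12 h21
  simp only [Prod.mk.injEq, mutatePair]
  constructor
  · funext i j
    simp only [mutateB]
    have hne2 : t₂ ≠ t₁ := hne.symm
    split_ifs <;> simp_all <;> ring
  · funext i j
    simp only [mutateB]
    have hne2 : t₂ ≠ t₁ := hne.symm
    split_ifs <;> simp_all <;> ring

/-- The invariant: all B-entries between distinct elements of `S` vanish. -/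
def ZeroOn (S : I → Prop) (B : I → I → ℤ) : Prop :=
  ∀ a b, S a → S b → a ≠ b → B a b = 0

lemma ZeroOn.mutateB {S : I → Prop} {B : I → I → ℤ} (hB : ZeroOn S B) {t : I}
    (ht : S t) : ZeroOn S (mutateB B t) := by
  intro a b ha hb hab
  simp only [_root_.mutateB]
  split_ifs with h
  · rcases h with h | h <;> subst h <;> simp [hB a b ha hb hab]
  · push_neg at h
    rw [hB a b ha hb hab, hB a t ha ht h.1, hB t b ht hb (fun e => h.2 e.symm)]
    simp

lemma ZeroOn.foldr {S : I → Prop} {p : (I → I → ℤ) × (I → I → ℤ)} (hp : ZeroOn S p.1)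
    {l : List I} (hl : ∀ t ∈ l, S t) :
    ZeroOn S (l.foldr (fun t q => mutatePair q t) p).1 := by
  induction l with
  | nil => exact hp
  | cons x xs ih =>
    have : ZeroOn S ((xs.foldr (fun t q => mutatePair q t) p).1) :=
      ih (fun t ht => hl t (List.mem_cons_of_mem _ ht))
    exact this.mutateB (hl x List.mem_cons_self)

/-- Folding mutations over a permuted list gives the same result,
provided all indices lie in `S` and the invariant holds. -/
lemma foldr_perm {S : I → Prop} {l₁ l₂ : List I} (hperm : l₁.Perm l₂) :
    ∀ p : (I → I → ℤ) × (I → I → ℤ), ZeroOn S p.1 → (∀ t ∈ l₁, S t) →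
    l₁.foldr (fun t q => mutatePair q t) p = l₂.foldr (fun t q => mutatePair q t) p := by
  induction hperm with
  | nil => intro p _ _; rfl
  | cons x l ih =>
    intro p hp hmem
    simp only [List.foldr_cons]
    rw [ih p hp (fun t ht => hmem t (List.mem_cons_of_mem _ ht))]
  | swap x y l =>
    intro p hp hmem
    simp only [List.foldr_cons]
    by_cases hxy : x = y
    · subst hxy; rfl
    · have hSx : S x := hmem x (by simp)
      have hSy : S y := hmem y (by simp)
      have hq : ZeroOn S ((l.foldr (fun t q => mutatePair q t) p).1) :=
        hp.foldr (fun t ht => hmem t (by simp [ht]))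
      exact mutatePair_comm _ x y hxy (hq x y hSx hSy hxy) (hq y x hSy hSx (Ne.symm hxy))
  | trans h₁ h₂ ih₁ ih₂ =>
    intro p hp hmem
    rw [ih₁ p hp hmem, ih₂ p hp (fun t ht => hmem t (h₁.mem_iff.mpr ht))]

/-- Relabelling by a permutation conjugates mutation. -/
lemma mutatePair_relabel (σ : Equiv.Perm I) (p : (I → I → ℤ) × (I → I → ℤ)) (t : I) :
    ((fun i j => (mutatePair p t).1 (σ i) (σ j)), (fun i j => (mutatePair p t).2 (σ i) (σ j)))
      = mutatePair ((fun i j => p.1 (σ i) (σ j)), (fun i j => p.2 (σ i) (σ j))) (σ⁻¹ t) := by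
  have key : ∀ i : I, (σ i = t) = (i = σ⁻¹ t) := by
    intro i
    simp [Equiv.Perm.inv_def, Equiv.eq_symm_apply, eq_comm]
  simp only [Prod.mk.injEq, mutatePair]
  constructor
  · funext i j
    simp only [mutateB, key, Equiv.Perm.coe_inv, Equiv.apply_symm_apply]
  · funext i j
    simp only [mutateB, key, Equiv.Perm.coe_inv, Equiv.apply_symm_apply]

lemma foldr_relabel (σ : Equiv.Perm I) (l : List I) (p : (I → I → ℤ) × (I → I → ℤ)) :
    ((fun i j => (l.foldr (fun t q => mutatePair q t) p).1 (σ i) (σ j)),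
     (fun i j => (l.foldr (fun t q => mutatePair q t) p).2 (σ i) (σ j)))
      = (l.map (fun t => σ⁻¹ t)).foldr (fun t q => mutatePair q t)
          ((fun i j => p.1 (σ i) (σ j)), (fun i j => p.2 (σ i) (σ j))) := by
  induction l with
  | nil => rfl
  | cons x xs ih =>
    simp only [List.map_cons, List.foldr_cons]
    rw [mutatePair_relabel σ _ x, ih]

end Aux

/-- σ-equivariance of the C-matrix is preserved by a single orbit mutation. -/
theorem c_matrix_equivariance_preserved {I : Type*} [Fintype I] [DecidableEq I]
    (B C : I → I → ℤ)
    (hskew : ∃ d : I → ℤ, (∀ i, 0 < d i) ∧ ∀ i j, d i * B i j = -(d j * B j i))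
    (σ : Equiv.Perm I)
    (haut : ∀ i j, B (σ i) (σ j) = B i j)
    (hadm : ∀ i₁ i₂, σ.SameCycle i₁ i₂ →
      (i₁ ≠ i₂ → B i₁ i₂ = 0) ∧ ∀ j, 0 ≤ B i₁ j * B i₂ j)
    (hC : ∀ i j, C (σ i) (σ j) = C i j) (k : I) :
    ∀ i j,
      ((Finset.univ.filter (fun t => σ.SameCycle k t)).toList.foldr
          (fun t p => mutatePair p t) (B, C)).2 (σ i) (σ j)
        = ((Finset.univ.filter (fun t => σ.SameCycle k t)).toList.foldr
          (fun t p => mutatePair p t) (B, C)).2 i j := by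
  intro i j
  set L := (Finset.univ.filter (fun t => σ.SameCycle k t)).toList with hL
  have hmemL : ∀ t, t ∈ L ↔ σ.SameCycle k t := by
    intro t; simp [hL, Finset.mem_toList]
  -- the invariant holds for B on the orbit S
  have hZ : ZeroOn (σ.SameCycle k) B := by
    intro a b ha hb hab
    exact (hadm a b (ha.symm.trans hb)).1 hab
  -- relabelled initial pair equals itself
  have hinit : ((fun i j => B (σ i) (σ j)), (fun i j => C (σ i) (σ j)))
      = ((B, C) : (I → I → ℤ) × (I → I → ℤ)) := by
    simp only [Prod.mk.injEq]
    exact ⟨funext fun a => funext fun b => haut a b, funext fun a => funext fun b => hC a b⟩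
  -- L.map σ⁻¹ is a permutation of L
  have hmapmem : ∀ t, t ∈ L.map (fun t => σ⁻¹ t) ↔ t ∈ L := by
    intro t
    simp only [List.mem_map, hmemL]
    constructor
    · rintro ⟨s, hs, rfl⟩
      have : σ.SameCycle s (σ⁻¹ s) := ⟨-1, by simp⟩
      exact hs.trans this
    · intro ht
      refine ⟨σ t, ?_, by simp⟩
      have : σ.SameCycle t (σ t) := ⟨1, by simp⟩
      exact ht.trans this
  have hnodup : L.Nodup := Finset.nodup_toList _
  have hnodup' : (L.map (fun t => σ⁻¹ t)).Nodup :=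
    hnodup.map (fun a b h => by simpa using congrArg σ h)
  have hperm : (L.map (fun t => σ⁻¹ t)).Perm L :=
    (List.perm_ext_iff_of_nodup hnodup' hnodup).mpr hmapmem
  have hrel := foldr_relabel σ L ((B, C) : (I → I → ℤ) × (I → I → ℤ))
  rw [hinit] at hrel
  have hfold : (L.map (fun t => σ⁻¹ t)).foldr (fun t q => mutatePair q t) (B, C)
      = L.foldr (fun t q => mutatePair q t) (B, C) :=
    foldr_perm hperm (B, C) hZ (fun t ht => (hmemL t).mp ((hmapmem t).mp ht))
  have := congrArg Prod.snd hrel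
  simp only at this
  calc (L.foldr (fun t p => mutatePair p t) (B, C)).2 (σ i) (σ j)
      = ((L.map (fun t => σ⁻¹ t)).foldr (fun t q => mutatePair q t) (B, C)).2 i j := by
        rw [← hfold] at this ⊢
        exact congrFun (congrFun this i) j
    _ = (L.foldr (fun t p => mutatePair p t) (B, C)).2 i j := by rw [hfold]
end

section
/- Let B be a skew-symmetrizable integer matrix with stable admissible automorphism σ, and let D = (d_{ij}) be an integer matrix satisfying d_{σ(i)σ(j)} = d_{ij}. Suppose D' is obtained from D by an orbit mutation at orbit k̄: d'_{ij} = −d_{ij} + max(Σ_t d_{it}[b_{tj}]_+, Σ_t d_{it}[−b_{tj}]_+) if j ∈ k̄ (mutating at each index of k̄, which commute), and d'_{ij} = d_{ij} otherwise, while B is orbit-mutated accordingly. Then D' also satisfies d'_{σ(i)σ(j)} = d'_{ij}. -/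
open scoped Classical

/-- Mutation of a pair (exchange matrix, D-matrix) in direction `k`, via the
denominator-vector recursion. -/
def mutatePairD {I : Type*} [Fintype I] [DecidableEq I]
    (p : (I → I → ℤ) × (I → I → ℤ)) (k : I) : (I → I → ℤ) × (I → I → ℤ) :=
  (mutateB p.1 k,
    fun i j =>
      if j = k then
        -p.2 i k + max (∑ l, p.2 i l * max (p.1 l k) 0)
          (∑ l, p.2 i l * max (-p.1 l k) 0)
      else p.2 i j)

/-- Orbit mutation of the exchange matrix at the `σ`-orbit of `k`. -/
noncomputable def orbitMutB {I : Type*} [Fintype I] [DecidableEq I]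
    (σ : Equiv.Perm I) (B : I → I → ℤ) (k : I) : I → I → ℤ :=
  (Finset.univ.filter (fun t => σ.SameCycle k t)).toList.foldr
    (fun t M => mutateB M t) B

/-- `σ` is an admissible automorphism of `B`. -/
def AdmissibleAut {I : Type*} (σ : Equiv.Perm I) (B : I → I → ℤ) : Prop :=
  (∀ i j, B (σ i) (σ j) = B i j) ∧
  ∀ i₁ i₂, σ.SameCycle i₁ i₂ →
    (i₁ ≠ i₂ → B i₁ i₂ = 0) ∧ ∀ j, 0 ≤ B i₁ j * B i₂ j

lemma foldB_col {I : Type*} [Fintype I] [DecidableEq I]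
    (B D : I → I → ℤ) :
    ∀ (L : List I) (j : I), j ∉ L → (∀ t ∈ L, B t j = 0) →
      ∀ i, (L.foldr (fun t p => mutatePairD p t) (B, D)).1 i j = B i j := by
  intro L
  induction L with
  | nil => intro j _ _ i; rfl
  | cons u L ih =>
    intro j hj hz i
    have hju : j ≠ u := fun h => hj (h ▸ (List.mem_cons_self : u ∈ u :: L))
    have hj' : j ∉ L := fun h => hj (List.mem_cons_of_mem _ h)
    have hz' : ∀ t ∈ L, B t j = 0 := fun t ht => hz t (List.mem_cons_of_mem _ ht)
    have hu : B u j = 0 := hz u ((List.mem_cons_self : u ∈ u :: L))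
    show mutateB _ u i j = B i j
    unfold mutateB
    by_cases hi : i = u
    · rw [if_pos (Or.inl hi), hi, ih j hj' hz' u, hu, neg_zero]
    · rw [if_neg (by tauto), ih j hj' hz' i, ih j hj' hz' u, hu]
      simp

lemma foldD_eq {I : Type*} [Fintype I] [DecidableEq I]
    (B D : I → I → ℤ) :
    ∀ (L : List I), L.Nodup → (∀ t ∈ L, ∀ t' ∈ L, t ≠ t' → B t t' = 0) →
      ∀ i j, (L.foldr (fun t p => mutatePairD p t) (B, D)).2 i j =
        if j ∈ L then
          -D i j + max (∑ l, D i l * max (B l j) 0) (∑ l, D i l * max (-B l j) 0)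
        else D i j := by
  intro L
  induction L with
  | nil => intro _ _ i j; simp
  | cons u L ih =>
    intro hnd hz i j
    have hnd' : L.Nodup := hnd.of_cons
    have hu' : u ∉ L := by simp [List.nodup_cons] at hnd; exact hnd.1
    have hz' : ∀ t ∈ L, ∀ t' ∈ L, t ≠ t' → B t t' = 0 :=
      fun t ht t' ht' => hz t (List.mem_cons_of_mem _ ht) t' (List.mem_cons_of_mem _ ht')
    have hzu : ∀ t ∈ L, B t u = 0 := fun t ht =>
      hz t (List.mem_cons_of_mem _ ht) u ((List.mem_cons_self : u ∈ u :: L))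
        (fun h => hu' (h ▸ ht))
    show (if j = u then _ else _) = _
    by_cases hju : j = u
    · subst hju
      rw [if_pos rfl, if_pos ((List.mem_cons_self : j ∈ j :: L))]
      have hB : ∀ l, (L.foldr (fun t p => mutatePairD p t) (B, D)).1 l j = B l j :=
        foldB_col B D L j hu' hzu
      have hDj : (L.foldr (fun t p => mutatePairD p t) (B, D)).2 i j = D i j := by
        rw [ih hnd' hz', if_neg hu']
      have hs1 : ∑ l, (L.foldr (fun t p => mutatePairD p t) (B, D)).2 i l *
          max ((L.foldr (fun t p => mutatePairD p t) (B, D)).1 l j) 0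
          = ∑ l, D i l * max (B l j) 0 := by
        refine Finset.sum_congr rfl fun l _ => ?_
        rw [hB l, ih hnd' hz']
        by_cases hl : l ∈ L
        · rw [if_pos hl, hzu l hl]; simp
        · rw [if_neg hl]
      have hs2 : ∑ l, (L.foldr (fun t p => mutatePairD p t) (B, D)).2 i l *
          max (-(L.foldr (fun t p => mutatePairD p t) (B, D)).1 l j) 0
          = ∑ l, D i l * max (-B l j) 0 := by
        refine Finset.sum_congr rfl fun l _ => ?_
        rw [hB l, ih hnd' hz']
        by_cases hl : l ∈ L
        · rw [if_pos hl, hzu l hl]; simp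
        · rw [if_neg hl]
      rw [hDj, hs1, hs2]
    · rw [if_neg hju, ih hnd' hz']
      have : (j ∈ u :: L) ↔ (j ∈ L) := by
        simp [List.mem_cons, hju]
      by_cases hl : j ∈ L
      · rw [if_pos hl, if_pos (this.2 hl)]
      · rw [if_neg hl, if_neg (fun h => hl (this.1 h))]

/-- σ-equivariance of the D-matrix is preserved by a single orbit mutation,
for a skew-symmetrizable `B` with stable admissible automorphism `σ`. -/
theorem d_matrix_equivariance_preserved {I : Type*} [Fintype I] [DecidableEq I]
    (B D : I → I → ℤ)
    (hskew : ∃ d : I → ℤ, (∀ i, 0 < d i) ∧ ∀ i j, d i * B i j = -(d j * B j i))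
    (σ : Equiv.Perm I)
    (hstable : ∀ ks : List I, AdmissibleAut σ (ks.foldl (orbitMutB σ) B))
    (hD : ∀ i j, D (σ i) (σ j) = D i j) (k : I) :
    ∀ i j,
      ((Finset.univ.filter (fun t => σ.SameCycle k t)).toList.foldr
          (fun t p => mutatePairD p t) (B, D)).2 (σ i) (σ j)
        = ((Finset.univ.filter (fun t => σ.SameCycle k t)).toList.foldr
          (fun t p => mutatePairD p t) (B, D)).2 i j := by
  intro i j
  have hB : AdmissibleAut σ B := hstable []
  have hmem : ∀ t, t ∈ (Finset.univ.filter (fun t => σ.SameCycle k t)).toList ↔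
      σ.SameCycle k t := by
    intro t; simp [Finset.mem_toList]
  have hnd := Finset.nodup_toList (Finset.univ.filter (fun t => σ.SameCycle k t))
  have hzero : ∀ t ∈ (Finset.univ.filter (fun t => σ.SameCycle k t)).toList,
      ∀ t' ∈ (Finset.univ.filter (fun t => σ.SameCycle k t)).toList, t ≠ t' → B t t' = 0 := by
    intro t ht t' ht' hne
    exact (hB.2 t t' (((hmem t).1 ht).symm.trans ((hmem t').1 ht'))).1 hne
  rw [foldD_eq B D _ hnd hzero, foldD_eq B D _ hnd hzero]
  have hmemiff : σ j ∈ (Finset.univ.filter (fun t => σ.SameCycle k t)).toList ↔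
      j ∈ (Finset.univ.filter (fun t => σ.SameCycle k t)).toList := by
    rw [hmem, hmem, Equiv.Perm.sameCycle_apply_right]
  by_cases hj : j ∈ (Finset.univ.filter (fun t => σ.SameCycle k t)).toList
  · rw [if_pos (hmemiff.2 hj), if_pos hj]
    have h1 : ∑ l, D (σ i) l * max (B l (σ j)) 0 = ∑ l, D i l * max (B l j) 0 := by
      rw [← Equiv.sum_comp σ (fun l => D (σ i) l * max (B l (σ j)) 0)]
      exact Finset.sum_congr rfl fun l _ => by rw [hD, hB.1]
    have h2 : ∑ l, D (σ i) l * max (-B l (σ j)) 0 = ∑ l, D i l * max (-B l j) 0 := by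
      rw [← Equiv.sum_comp σ (fun l => D (σ i) l * max (-B l (σ j)) 0)]
      exact Finset.sum_congr rfl fun l _ => by rw [hD, hB.1]
    rw [h1, h2, hD]
  · rw [if_neg (fun h => hj (hmemiff.1 h)), if_neg hj, hD]
end

section
/- Let B be a skew-symmetrizable matrix with stable admissible automorphism σ, C a σ-equivariant C-matrix (c_{σ(i)σ(j)} = c_{ij}) whose columns are sign-coherent, with each column having sign independent of the choice of representative within each σ-orbit of rows. Then the folded matrix C̄ with entries c̄_{ī j̄} := Σ_{s∈ī} c_{sj} satisfies the folded c-vector mutation rule: if (B', C') is obtained from (B, C) by orbit mutation at k̄, then c̄'_{ī j̄} = −c̄_{ī j̄} when j̄ = k̄, and c̄'_{ī j̄} = c̄_{ī j̄} + c̄_{ī k̄}[b̄_{k̄ j̄}]_+ + [−c̄_{ī k̄}]_+ b̄_{k̄ j̄} otherwise, where B̄ is the folding of B. -/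
open scoped Classical

lemma zpow_equivariant {I : Type*} (σ : Equiv.Perm I) (C : I → I → ℤ)
    (hC : ∀ i j, C (σ i) (σ j) = C i j) :
    ∀ (m : ℤ) (s j : I), C ((σ ^ m) s) ((σ ^ m) j) = C s j := by
  have hinv : ∀ s j, C (σ⁻¹ s) (σ⁻¹ j) = C s j := by
    intro s j
    have := hC (σ⁻¹ s) (σ⁻¹ j)
    simpa using this.symm
  intro m
  induction m using Int.induction_on with
  | zero => intro s j; simp
  | succ n ih =>
    intro s j
    have h1 : ∀ x : I, (σ ^ ((n : ℤ) + 1)) x = (σ ^ (n : ℤ)) (σ x) := by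
      intro x; rw [zpow_add_one]; rfl
    rw [h1 s, h1 j, ih, hC]
  | pred n ih =>
    intro s j
    have h1 : ∀ x : I, (σ ^ (-(n : ℤ) - 1)) x = (σ ^ (-(n : ℤ))) (σ⁻¹ x) := by
      intro x; rw [zpow_sub_one]; rfl
    rw [h1 s, h1 j, ih, hinv]

lemma fold_spec {I : Type*} [DecidableEq I] (B C : I → I → ℤ) (K : I → Prop)
    (hB0 : ∀ t t', K t → K t' → B t t' = 0) :
    ∀ (L : List I), (∀ t ∈ L, K t) → L.Nodup →
    (∀ t t', K t → K t' → (L.foldr (fun t p => mutatePair p t) (B, C)).1 t t' = 0) ∧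
    (∀ t j, K t → ¬ K j →
      (L.foldr (fun t p => mutatePair p t) (B, C)).1 t j = if t ∈ L then -B t j else B t j) ∧
    (∀ s j, K j →
      (L.foldr (fun t p => mutatePair p t) (B, C)).2 s j = if j ∈ L then -C s j else C s j) ∧
    (∀ s j, ¬ K j →
      (L.foldr (fun t p => mutatePair p t) (B, C)).2 s j =
        C s j + (L.map (fun t => C s t * max (B t j) 0 + max (-(C s t)) 0 * B t j)).sum) := by
  intro L
  induction L with
  | nil => intro _ _; refine ⟨fun t t' ht ht' => hB0 t t' ht ht', ?_, ?_, ?_⟩ <;> simp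
  | cons a l ih =>
    intro hmem hnd
    have ha : K a := hmem a (List.mem_cons_self)
    have hal : a ∉ l := (List.nodup_cons.mp hnd).1
    obtain ⟨Q1, Q2, Q3, Q4⟩ := ih (fun t ht => hmem t (List.mem_cons_of_mem a ht))
      (List.nodup_cons.mp hnd).2
    set Q := l.foldr (fun t p => mutatePair p t) (B, C) with hQ
    have hfold : (a :: l).foldr (fun t p => mutatePair p t) (B, C) = mutatePair Q a := by
      simp [List.foldr_cons, hQ]
    rw [hfold]
    have hQ2a : ∀ s, Q.2 s a = C s a := by
      intro s; rw [Q3 s a ha]; simp [hal]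
    refine ⟨?_, ?_, ?_, ?_⟩
    · intro t t' ht ht'
      simp only [mutatePair, mutateB]
      by_cases h : t = a ∨ t' = a
      · simp [h, Q1 t t' ht ht']
      · simp only [h, if_false]
        rw [Q1 t t' ht ht', Q1 t a ht ha, Q1 a t' ha ht']
        ring
    · intro t j ht hj
      have hja : j ≠ a := fun h => hj (h ▸ ha)
      simp only [mutatePair, mutateB]
      by_cases h : t = a
      · subst h
        simp only [true_or, if_true]
        rw [Q2 t j ht hj]
        simp [hal]
      · have : ¬ (t = a ∨ j = a) := by tauto
        simp only [this, if_false]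
        rw [Q2 t j ht hj, Q1 t a ht ha]
        simp [List.mem_cons, h]
    · intro s j hj
      simp only [mutatePair]
      by_cases h : j = a
      · subst h
        simp only [if_pos rfl, hQ2a s]
        simp
      · simp only [h, if_false]
        rw [Q3 s j hj, Q1 a j ha hj]
        simp [List.mem_cons, h]
    · intro s j hj
      have hja : j ≠ a := fun h => hj (h ▸ ha)
      simp only [mutatePair, hja, if_false]
      rw [Q4 s j hj, hQ2a s, Q2 a j ha hj]
      simp only [hal, if_false, List.map_cons, List.sum_cons]
      ring

lemma sum_max_eq {I : Type*} (S : Finset I) (f : I → ℤ)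
    (h : ∀ a ∈ S, ∀ b ∈ S, 0 ≤ f a * f b) :
    ∑ a ∈ S, max (f a) 0 = max (∑ a ∈ S, f a) 0 := by
  by_cases hpos : ∀ a ∈ S, 0 ≤ f a
  · rw [Finset.sum_congr rfl (fun a haS => max_eq_left (hpos a haS)),
      max_eq_left (Finset.sum_nonneg hpos)]
  · push_neg at hpos
    obtain ⟨a₀, ha₀, ha₀neg⟩ := hpos
    have hneg : ∀ b ∈ S, f b ≤ 0 := by
      intro b hb
      by_contra hb'
      push_neg at hb'
      nlinarith [h a₀ ha₀ b hb]
    rw [Finset.sum_congr rfl (fun a haS => max_eq_right (hneg a haS)),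
      max_eq_right (Finset.sum_nonpos hneg)]
    simp

/-- The folded C-matrix satisfies the folded c-vector mutation rule. -/
theorem folded_c_matrix_mutation {I : Type*} [Fintype I] [DecidableEq I]
    (B C : I → I → ℤ)
    (hskew : ∃ d : I → ℤ, (∀ i, 0 < d i) ∧ ∀ i j, d i * B i j = -(d j * B j i))
    (σ : Equiv.Perm I)
    (hstable : ∀ ks : List I, AdmissibleAut σ (ks.foldl (orbitMutB σ) B))
    (hC : ∀ i j, C (σ i) (σ j) = C i j)
    (hsc : ∀ j, (fun i => C i j) ≠ 0 ∧ ((∀ i, 0 ≤ C i j) ∨ (∀ i, C i j ≤ 0)))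
    (hrep : ∀ i s j, σ.SameCycle i s →
      (0 ≤ C i j ↔ 0 ≤ C s j) ∧ (C i j ≤ 0 ↔ C s j ≤ 0))
    (k : I) :
    ∀ i j,
      (σ.SameCycle k j →
        (∑ s ∈ Finset.univ.filter (fun s => σ.SameCycle i s),
          ((Finset.univ.filter (fun t => σ.SameCycle k t)).toList.foldr
            (fun t p => mutatePair p t) (B, C)).2 s j)
        = -∑ s ∈ Finset.univ.filter (fun s => σ.SameCycle i s), C s j) ∧
      (¬ σ.SameCycle k j →
        (∑ s ∈ Finset.univ.filter (fun s => σ.SameCycle i s),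
          ((Finset.univ.filter (fun t => σ.SameCycle k t)).toList.foldr
            (fun t p => mutatePair p t) (B, C)).2 s j)
        = (∑ s ∈ Finset.univ.filter (fun s => σ.SameCycle i s), C s j)
          + (∑ s ∈ Finset.univ.filter (fun s => σ.SameCycle i s), C s k)
            * max (∑ t ∈ Finset.univ.filter (fun t => σ.SameCycle k t), B t j) 0
          + max (-(∑ s ∈ Finset.univ.filter (fun s => σ.SameCycle i s), C s k)) 0
            * ∑ t ∈ Finset.univ.filter (fun t => σ.SameCycle k t), B t j) := by
    classical
  obtain ⟨d, hd, hds⟩ := hskew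
  have adm : AdmissibleAut σ B := hstable []
  have hB0 : ∀ t t', σ.SameCycle k t → σ.SameCycle k t' → B t t' = 0 := by
    intro t t' ht ht'
    by_cases h : t = t'
    · subst h
      have h1 := hds t t
      have h2 : d t * B t t = 0 := by linarith
      rcases mul_eq_zero.mp h2 with h3 | h3
      · exact absurd h3 (hd t).ne'
      · exact h3
    · exact (adm.2 t t' (ht.symm.trans ht')).1 h
  intro i j
  set A := Finset.univ.filter (fun s => σ.SameCycle i s) with hA
  set T := Finset.univ.filter (fun t => σ.SameCycle k t) with hT
  have hLmem : ∀ t ∈ T.toList, σ.SameCycle k t := by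
    intro t ht
    have h := Finset.mem_toList.mp ht
    rw [hT] at h
    exact (Finset.mem_filter.mp h).2
  obtain ⟨F1, F2, F3, F4⟩ := fold_spec B C (σ.SameCycle k) hB0 T.toList hLmem T.nodup_toList
  have hcol : ∀ t, σ.SameCycle k t → ∑ s ∈ A, C s t = ∑ s ∈ A, C s k := by
    intro t ht
    obtain ⟨m, hm⟩ := ht
    subst hm
    refine (Finset.sum_equiv (σ ^ m) ?_ ?_).symm
    · intro s
      simp only [hA, Finset.mem_filter, Finset.mem_univ, true_and]
      constructor
      · intro h; exact h.trans ⟨m, rfl⟩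
      · intro h; exact h.trans ⟨-m, by simp⟩
    · intro s _
      exact (zpow_equivariant σ C hC m s k).symm
  have hsign : ∀ t, σ.SameCycle k t →
      ∑ s ∈ A, max (-(C s t)) 0 = max (-(∑ s ∈ A, C s k)) 0 := by
    intro t ht
    rcases (hsc t).2 with hp | hn
    · have hge : (0:ℤ) ≤ ∑ s ∈ A, C s k := by
        rw [← hcol t ht]; exact Finset.sum_nonneg (fun s _ => hp s)
      rw [Finset.sum_congr rfl (fun s _ => max_eq_right (neg_nonpos.mpr (hp s))),
        Finset.sum_const_zero, max_eq_right (neg_nonpos.mpr hge)]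
    · have hle : ∑ s ∈ A, C s k ≤ 0 := by
        rw [← hcol t ht]; exact Finset.sum_nonpos (fun s _ => hn s)
      rw [Finset.sum_congr rfl (fun s _ => max_eq_left (neg_nonneg.mpr (hn s))),
        Finset.sum_neg_distrib, hcol t ht, max_eq_left (neg_nonneg.mpr hle)]
  have hBsign : ∑ t ∈ T, max (B t j) 0 = max (∑ t ∈ T, B t j) 0 := by
    apply sum_max_eq
    intro a haT b hbT
    rw [hT] at haT hbT
    exact (adm.2 a b ((Finset.mem_filter.mp haT).2.symm.trans (Finset.mem_filter.mp hbT).2)).2 j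
  constructor
  · intro hkj
    have hjL : j ∈ T.toList := by
      rw [Finset.mem_toList, hT, Finset.mem_filter]
      exact ⟨Finset.mem_univ j, hkj⟩
    rw [Finset.sum_congr rfl (fun s _ => (F3 s j hkj).trans (if_pos hjL))]
    exact Finset.sum_neg_distrib _
  · intro hkj
    rw [Finset.sum_congr rfl (fun s _ => F4 s j hkj)]
    simp only [Finset.sum_map_toList]
    rw [Finset.sum_add_distrib, Finset.sum_comm]
    have key : ∀ t ∈ T, (∑ s ∈ A, (C s t * max (B t j) 0 + max (-(C s t)) 0 * B t j))
        = (∑ s ∈ A, C s k) * max (B t j) 0 + max (-(∑ s ∈ A, C s k)) 0 * B t j := by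
      intro t htT
      rw [hT] at htT
      have hkt := (Finset.mem_filter.mp htT).2
      rw [Finset.sum_add_distrib, ← Finset.sum_mul, ← Finset.sum_mul, hcol t hkt, hsign t hkt]
    rw [Finset.sum_congr rfl key, Finset.sum_add_distrib, ← Finset.mul_sum, ← Finset.mul_sum,
      hBsign]
    ring
end
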